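/- In the icl=2 gadget construction, the Γ-cycles of (G,V) are exactly the following, for each triple t_i=(x,y,z) ∈ T: the six international length-2 cycles ⟨x,a_i^1⟩, ⟨y,a_i^3⟩, ⟨z,a_i^5⟩, ⟨a_i^1,a_i^2⟩, ⟨a_i^3,a_i^4⟩, ⟨a_i^5,a_i^6⟩, and the national length-3 cycle ⟨a_i^2,a_i^4,a_i^6⟩; in particular, every Γ-cycle is contained within a single gadget. -/

import Mathlib

open scoped Classical

/-- An `n`-partitioned compatibility graph: a finite directed graph on a finite
set of natural-number vertices, without self-loops, whose vertex set is
partitioned into `n` nonempty countries. -/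
structure PartGraph (n : ℕ) where
  verts : Finset ℕ
  arcs : Finset (ℕ × ℕ)
  arcs_mem : ∀ p ∈ arcs, p.1 ∈ verts ∧ p.2 ∈ verts
  no_loops : ∀ v, (v, v) ∉ arcs
  country : ℕ → Fin n
  country_nonempty : ∀ i : Fin n, ∃ v ∈ verts, country v = i

/-- Cyclic access to the entries of a list. -/
def cyc (l : List ℕ) (k : ℕ) : ℕ := l.getD (k % l.length) 0

/-- `l` is a (directed) cycle of `G`: a cyclic sequence of at least two distinct
vertices, consecutive ones (cyclically) joined by arcs. -/
def IsCycle {n : ℕ} (G : PartGraph n) (l : List ℕ) : Prop :=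
  2 ≤ l.length ∧ l.Nodup ∧ (∀ v ∈ l, v ∈ G.verts) ∧
    ∀ k < l.length, (cyc l k, cyc l (k + 1)) ∈ G.arcs

/-- All vertices of `l` belong to country `i`. -/
def IsNationalTo {n : ℕ} (G : PartGraph n) (l : List ℕ) (i : Fin n) : Prop :=
  ∀ v ∈ l, G.country v = i

/-- A national cycle: all vertices in one country. -/
def IsNational {n : ℕ} (G : PartGraph n) (l : List ℕ) : Prop :=
  ∃ i, IsNationalTo G l i

/-- An international cycle: not national (equivalently, for cycles, it contains
an international arc). -/
def IsInternational {n : ℕ} (G : PartGraph n) (l : List ℕ) : Prop :=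
  ¬ IsNational G l

/-- Position `k` (taken cyclically) is the start of a `V_i`-segment of `l`:
the vertex there is in country `i` but the cyclically preceding one is not. -/
def segStart {n : ℕ} (G : PartGraph n) (l : List ℕ) (i : Fin n) (k : ℕ) : Prop :=
  G.country (cyc l k) = i ∧ G.country (cyc l (k + l.length - 1)) ≠ i

/-- The size of the run of consecutive (cyclic) positions of `l`, starting at
position `k`, whose vertices are in country `i`.  At a segment start this is
exactly the size of that `V_i`-segment. -/
noncomputable def runLen {n : ℕ} (G : PartGraph n) (l : List ℕ) (i : Fin n) (k : ℕ) : ℕ :=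
  ((Finset.range l.length).filter
    fun j => ∀ j' ≤ j, G.country (cyc l (k + j')) = i).card

/-- The number of `V_i`-segments of the cycle `l`. -/
noncomputable def numSegs {n : ℕ} (G : PartGraph n) (l : List ℕ) (i : Fin n) : ℕ :=
  ((Finset.range l.length).filter fun k => segStart G l i k).card

/-- A set `Γ` of country-specific parameters for `n` countries. -/
structure Params (n : ℕ) where
  icl : ℕ∞
  ncl : Fin n → ℕ∞
  iss : Fin n → ℕ∞
  isn : Fin n → ℕ∞
  icl_ne_one : icl ≠ 1
  ncl_ne_one : ∀ i, ncl i ≠ 1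
  iss_pos : ∀ i, 1 ≤ iss i
  isn_pos : ∀ i, 1 ≤ isn i

/-- `l` is a `Γ`-cycle of `(G, 𝒱)`. -/
def IsGammaCycle {n : ℕ} (G : PartGraph n) (Γ : Params n) (l : List ℕ) : Prop :=
  IsCycle G l ∧
    ((∃ i, IsNationalTo G l i ∧ (l.length : ℕ∞) ≤ Γ.ncl i) ∨
      (IsInternational G l ∧ (l.length : ℕ∞) ≤ Γ.icl ∧
        (∀ i, ∀ k < l.length, segStart G l i k → (runLen G l i k : ℕ∞) ≤ Γ.iss i) ∧
        (∀ i, (numSegs G l i : ℕ∞) ≤ Γ.isn i)))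

/-- A cycle packing of `G`: a set of pairwise vertex-disjoint cycles. -/
def IsPacking {n : ℕ} (G : PartGraph n) (P : Finset (List ℕ)) : Prop :=
  (∀ l ∈ P, IsCycle G l) ∧
    ∀ l ∈ P, ∀ l' ∈ P, l ≠ l' → ∀ v ∈ l, v ∉ l'

/-- The size of a cycle packing: total number of arcs (= vertices) of its cycles. -/
def packSize (P : Finset (List ℕ)) : ℕ := ∑ l ∈ P, l.length

/-- A `Γ`-cycle packing of `(G, 𝒱)`. -/
def IsGammaPackingG {n : ℕ} (G : PartGraph n) (Γ : Params n) (P : Finset (List ℕ)) : Prop :=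
  IsPacking G P ∧ ∀ l ∈ P, IsGammaCycle G Γ l


/-- The arcs of the `icl = 2` gadget associated with a triple `t = (x,y,z)`;
`a t 0, …, a t 5` are the fresh vertices `a_i^1, …, a_i^6`. -/
def gadgetArcs2 (a : ℕ × ℕ × ℕ → Fin 6 → ℕ) (t : ℕ × ℕ × ℕ) : Finset (ℕ × ℕ) :=
  [(t.1, a t 0), (a t 0, t.1), (t.2.1, a t 2), (a t 2, t.2.1), (t.2.2, a t 4), (a t 4, t.2.2),
   (a t 0, a t 1), (a t 1, a t 0), (a t 2, a t 3), (a t 3, a t 2), (a t 4, a t 5), (a t 5, a t 4),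
   (a t 1, a t 3), (a t 3, a t 5), (a t 5, a t 1)].toFinset

/-- The parameters `Γ = (2, icl = 2, ncl = (3,0), iss = (1,1), isn = (1,1))`. -/
def gadgetParams2 : Params 2 where
  icl := 2
  ncl := fun i => if i = 0 then 3 else 0
  iss := fun _ => 1
  isn := fun _ => 1
  icl_ne_one := by norm_num
  ncl_ne_one := by intro i; split <;> norm_num
  iss_pos := fun _ => le_refl _
  isn_pos := fun _ => le_refl _


lemma rot2 (x y : ℕ) (l : List ℕ) (h : l.IsRotated [x,y]) : l = [x,y] ∨ l = [y,x] := by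
  obtain ⟨n, hn⟩ := h.symm
  rw [← List.rotate_mod] at hn
  have h2 : n % ([x,y]:List ℕ).length < 2 := Nat.mod_lt _ (by simp)
  have : n % ([x,y]:List ℕ).length = 0 ∨ n % ([x,y]:List ℕ).length = 1 := by omega
  rcases this with h | h <;> rw [h] at hn
  · left; exact hn.symm
  · right; exact hn.symm

lemma rot3 (x y z : ℕ) (l : List ℕ) (h : l.IsRotated [x,y,z]) :
    l = [x,y,z] ∨ l = [y,z,x] ∨ l = [z,x,y] := by
  obtain ⟨n, hn⟩ := h.symm
  rw [← List.rotate_mod] at hn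
  have h2 : n % ([x,y,z]:List ℕ).length < 3 := Nat.mod_lt _ (by simp)
  have : n % ([x,y,z]:List ℕ).length = 0 ∨ n % ([x,y,z]:List ℕ).length = 1 ∨
      n % ([x,y,z]:List ℕ).length = 2 := by omega
  rcases this with h | h | h <;> rw [h] at hn
  · left; exact hn.symm
  · right; left; exact hn.symm
  · right; right; exact hn.symm

lemma two_cycle_gamma (G : PartGraph 2) (u v : ℕ)
    (huv : (u,v) ∈ G.arcs) (hvu : (v,u) ∈ G.arcs)
    (hc : G.country u ≠ G.country v) :
    IsGammaCycle G gadgetParams2 [u,v] := by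
  have hne : u ≠ v := fun h => hc (by rw [h])
  have hlen : ([u,v] : List ℕ).length = 2 := rfl
  refine ⟨⟨by simp, by simp [hne], ?_, ?_⟩, Or.inr ⟨?_, ?_, ?_, ?_⟩⟩
  · intro x hx
    rcases List.mem_pair.mp hx with rfl | rfl
    · exact (G.arcs_mem _ huv).1
    · exact (G.arcs_mem _ huv).2
  · intro k hk
    simp only [hlen] at hk
    interval_cases k
    · simpa [cyc] using huv
    · simpa [cyc] using hvu
  · rintro ⟨i, hi⟩
    exact hc ((hi u (by simp)).trans (hi v (by simp)).symm)
  · simp [gadgetParams2, hlen]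
  · intro i k hk hseg
    simp only [hlen] at hk hseg
    have hsub : ((Finset.range ([u,v]:List ℕ).length).filter
        fun j => ∀ j' ≤ j, G.country (cyc [u,v] (k + j')) = i) ⊆ {0} := by
      intro j hj
      simp only [Finset.mem_filter, Finset.mem_range, hlen] at hj
      obtain ⟨hj2, hj3⟩ := hj
      have : j = 0 ∨ j = 1 := by omega
      rcases this with rfl | rfl
      · simp
      · exact absurd (hj3 1 le_rfl) hseg.2
    have := Finset.card_le_card hsub
    simp only [Finset.card_singleton] at this
    calc (runLen G [u,v] i k : ℕ∞) ≤ 1 := by exact_mod_cast this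
      _ ≤ gadgetParams2.iss i := le_rfl
  · intro i
    have hsub : (numSegs G [u,v] i : ℕ) ≤ 1 := by
      apply Finset.card_le_one.mpr
      intro x hx y hy
      simp only [Finset.mem_filter, Finset.mem_range, hlen] at hx hy
      have hx2 : x = 0 ∨ x = 1 := by omega
      have hy2 : y = 0 ∨ y = 1 := by omega
      have e0 : segStart G [u,v] i 0 → G.country u = i ∧ G.country v ≠ i := by
        intro h; exact ⟨by simpa [cyc] using h.1, by simpa [cyc, hlen] using h.2⟩
      have e1 : segStart G [u,v] i 1 → G.country v = i ∧ G.country u ≠ i := by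
        intro h; exact ⟨by simpa [cyc] using h.1, by simpa [cyc, hlen] using h.2⟩
      rcases hx2 with rfl | rfl <;> rcases hy2 with rfl | rfl
      · rfl
      · exact absurd (e0 hx.2).1 (e1 hy.2).2
      · exact absurd (e0 hy.2).1 (e1 hx.2).2
      · rfl
    calc (numSegs G [u,v] i : ℕ∞) ≤ 1 := by exact_mod_cast hsub
      _ ≤ gadgetParams2.isn i := le_rfl

lemma three_cycle_gamma (G : PartGraph 2) (u v w : ℕ)
    (h1 : (u,v) ∈ G.arcs) (h2 : (v,w) ∈ G.arcs) (h3 : (w,u) ∈ G.arcs)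
    (hc : ∀ x ∈ ([u,v,w] : List ℕ), G.country x = 0) :
    IsGammaCycle G gadgetParams2 [u,v,w] := by
  have huv : u ≠ v := fun h => G.no_loops v (h ▸ h1)
  have hvw : v ≠ w := fun h => G.no_loops w (h ▸ h2)
  have hwu : w ≠ u := fun h => G.no_loops u (h ▸ h3)
  have hlen : ([u,v,w] : List ℕ).length = 3 := rfl
  refine ⟨⟨by simp, by simp [huv, hvw, Ne.symm hwu], ?_, ?_⟩,
    Or.inl ⟨0, hc, by simp [gadgetParams2, hlen]⟩⟩
  · intro x hx
    simp only [List.mem_cons, List.not_mem_nil, or_false] at hx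
    rcases hx with rfl | rfl | rfl
    · exact (G.arcs_mem _ h1).1
    · exact (G.arcs_mem _ h2).1
    · exact (G.arcs_mem _ h3).1
  · intro k hk
    simp only [hlen] at hk
    interval_cases k
    · simpa [cyc] using h1
    · simpa [cyc] using h2
    · simpa [cyc] using h3

set_option maxHeartbeats 1000000 in
/-- In the `icl = 2` gadget construction, the `Γ`-cycles of
`(G, 𝒱)` are exactly, for each triple `tᵢ = (x,y,z) ∈ T`: the six international
length-2 cycles `⟨x,aᵢ¹⟩, ⟨y,aᵢ³⟩, ⟨z,aᵢ⁵⟩, ⟨aᵢ¹,aᵢ²⟩, ⟨aᵢ³,aᵢ⁴⟩, ⟨aᵢ⁵,aᵢ⁶⟩` and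
the national length-3 cycle `⟨aᵢ²,aᵢ⁴,aᵢ⁶⟩` (cycles as lists up to rotation);
in particular every `Γ`-cycle is contained within a single gadget. -/
theorem gadget2_gamma_cycles
    (X Y Z : Finset ℕ) (T : Finset (ℕ × ℕ × ℕ)) (a : ℕ × ℕ × ℕ → Fin 6 → ℕ)
    (hX : X.Nonempty) (hY : Y.Nonempty) (hZ : Z.Nonempty)
    (hXY : Disjoint X Y) (hXZ : Disjoint X Z) (hYZ : Disjoint Y Z)
    (hT : T.Nonempty) (hTsub : ∀ t ∈ T, t.1 ∈ X ∧ t.2.1 ∈ Y ∧ t.2.2 ∈ Z)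
    (hfresh : ∀ t ∈ T, ∀ j, a t j ∉ X ∪ Y ∪ Z)
    (hainj : ∀ t ∈ T, ∀ t' ∈ T, ∀ j j', a t j = a t' j' → t = t' ∧ j = j')
    (G : PartGraph 2)
    (hverts : G.verts = (X ∪ Y ∪ Z) ∪ T.biUnion fun t => Finset.image (a t) Finset.univ)
    (harcs : G.arcs = T.biUnion fun t => gadgetArcs2 a t)
    (hcountry : ∀ v, G.country v =
      if ∃ t ∈ T, v = a t 0 ∨ v = a t 2 ∨ v = a t 4 then 1 else 0) :
    ∀ l : List ℕ, IsGammaCycle G gadgetParams2 l ↔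
      ∃ t ∈ T,
        l.IsRotated [t.1, a t 0] ∨ l.IsRotated [t.2.1, a t 2] ∨
        l.IsRotated [t.2.2, a t 4] ∨ l.IsRotated [a t 0, a t 1] ∨
        l.IsRotated [a t 2, a t 3] ∨ l.IsRotated [a t 4, a t 5] ∨
        l.IsRotated [a t 1, a t 3, a t 5] := by

  -- basic freshness facts
  have hfr : ∀ t ∈ T, ∀ t' ∈ T, ∀ j : Fin 6,
      a t j ≠ t'.1 ∧ a t j ≠ t'.2.1 ∧ a t j ≠ t'.2.2 := by
    intro t ht t' ht' j
    obtain ⟨h1, h2, h3⟩ := hTsub t' ht'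
    have hf := hfresh t ht j
    simp only [Finset.mem_union, not_or] at hf
    exact ⟨fun h => hf.1.1 (h ▸ h1), fun h => hf.1.2 (h ▸ h2), fun h => hf.2 (h ▸ h3)⟩
  -- country facts
  have hcA1 : ∀ t ∈ T, G.country (a t 0) = 1 := fun t ht => by
    rw [hcountry, if_pos ⟨t, ht, Or.inl rfl⟩]
  have hcA3 : ∀ t ∈ T, G.country (a t 2) = 1 := fun t ht => by
    rw [hcountry, if_pos ⟨t, ht, Or.inr (Or.inl rfl)⟩]
  have hcA5 : ∀ t ∈ T, G.country (a t 4) = 1 := fun t ht => by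
    rw [hcountry, if_pos ⟨t, ht, Or.inr (Or.inr rfl)⟩]
  have hcA0 : ∀ t ∈ T, ∀ j : Fin 6, j = 1 ∨ j = 3 ∨ j = 5 → G.country (a t j) = 0 := by
    intro t ht j hj
    rw [hcountry, if_neg]
    rintro ⟨t', ht', h | h | h⟩ <;>
      [ have := (hainj t ht t' ht' j 0 h).2; have := (hainj t ht t' ht' j 2 h).2;
        have := (hainj t ht t' ht' j 4 h).2 ] <;>
      rcases hj with rfl | rfl | rfl <;> exact absurd this (by decide)
  have hcXYZ : ∀ v ∈ X ∪ Y ∪ Z, G.country v = 0 := by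
    intro v hv
    rw [hcountry, if_neg]
    rintro ⟨t', ht', h | h | h⟩ <;> exact hfresh t' ht' _ (h ▸ hv)
  -- arc classification between fresh vertices
  have hAA : ∀ t ∈ T, ∀ j j' : Fin 6, (a t j, a t j') ∈ G.arcs →
      (j, j') ∈ ({(0,1),(1,0),(2,3),(3,2),(4,5),(5,4),(1,3),(3,5),(5,1)} :
        Finset (Fin 6 × Fin 6)) := by
    intro t ht j j' h
    rw [harcs, Finset.mem_biUnion] at h
    obtain ⟨t', ht', h⟩ := h
    simp only [gadgetArcs2, List.toFinset_cons, List.toFinset_nil, insert_empty_eq,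
      Finset.mem_insert, Finset.mem_singleton, Prod.mk.injEq] at h
    have hf := fun (j : Fin 6) => hfr t ht t' ht' j
    rcases h with ⟨h1,h2⟩|⟨h1,h2⟩|⟨h1,h2⟩|⟨h1,h2⟩|⟨h1,h2⟩|⟨h1,h2⟩|⟨h1,h2⟩|⟨h1,h2⟩|⟨h1,h2⟩|⟨h1,h2⟩|⟨h1,h2⟩|⟨h1,h2⟩|⟨h1,h2⟩|⟨h1,h2⟩|⟨h1,h2⟩ <;>
      first
      | (exact absurd h1 (hf j).1) | (exact absurd h1 (hf j).2.1) | (exact absurd h1 (hf j).2.2)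
      | (exact absurd h2 (hf j').1) | (exact absurd h2 (hf j').2.1) | (exact absurd h2 (hf j').2.2)
      | (obtain ⟨rfl, rfl⟩ := hainj t ht t' ht' _ _ h1;
         obtain ⟨-, rfl⟩ := hainj t ht t ht _ _ h2; decide)
  -- arcs from a fresh vertex of index 1,3,5 to a country-0 vertex
  have hnatArc : ∀ u v, (u, v) ∈ G.arcs → G.country u = 0 → G.country v = 0 →
      ∃ t ∈ T, (u = a t 1 ∧ v = a t 3) ∨ (u = a t 3 ∧ v = a t 5) ∨
        (u = a t 5 ∧ v = a t 1) := by
    intro u v h hu hv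
    rw [harcs, Finset.mem_biUnion] at h
    obtain ⟨t, ht, h⟩ := h
    simp only [gadgetArcs2, List.toFinset_cons, List.toFinset_nil, insert_empty_eq,
      Finset.mem_insert, Finset.mem_singleton, Prod.mk.injEq] at h
    refine ⟨t, ht, ?_⟩
    rcases h with ⟨rfl,rfl⟩|⟨rfl,rfl⟩|⟨rfl,rfl⟩|⟨rfl,rfl⟩|⟨rfl,rfl⟩|⟨rfl,rfl⟩|⟨rfl,rfl⟩|⟨rfl,rfl⟩|⟨rfl,rfl⟩|⟨rfl,rfl⟩|⟨rfl,rfl⟩|⟨rfl,rfl⟩|⟨rfl,rfl⟩|⟨rfl,rfl⟩|⟨rfl,rfl⟩ <;>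
      first
      | (exact absurd hu (by rw [hcA1 t ht]; decide))
      | (exact absurd hu (by rw [hcA3 t ht]; decide))
      | (exact absurd hu (by rw [hcA5 t ht]; decide))
      | (exact absurd hv (by rw [hcA1 t ht]; decide))
      | (exact absurd hv (by rw [hcA3 t ht]; decide))
      | (exact absurd hv (by rw [hcA5 t ht]; decide))
      | simp
  intro l
  constructor
  · rintro ⟨⟨hl2, hnd, hmem, harc⟩, hΓ⟩
    rcases hΓ with ⟨i, hnat, hlen⟩ | ⟨hint, hlen, hiss, hisn⟩
    · -- national case
      have hi : i = 0 := by
        by_contra h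
        have h1 : i = 1 := by revert h; fin_cases i <;> decide
        subst h1
        have hval : gadgetParams2.ncl 1 = 0 := by simp [gadgetParams2]
        rw [hval] at hlen
        have h0 : l.length ≤ 0 := by exact_mod_cast hlen
        omega
      subst hi
      have hlen3 : l.length ≤ 3 := by
        have hval : gadgetParams2.ncl 0 = 3 := by simp [gadgetParams2]
        rw [hval] at hlen
        exact_mod_cast hlen
      have hnat' : ∀ v ∈ l, G.country v = 0 := hnat
      -- length 2 or 3
      have : l.length = 2 ∨ l.length = 3 := by omega
      rcases this with h2 | h3
      · -- length 2 national: impossible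
        obtain ⟨u, v, rfl⟩ := List.length_eq_two.mp h2
        have a1 : (u, v) ∈ G.arcs := by simpa [cyc] using harc 0 (by simp)
        have a2 : (v, u) ∈ G.arcs := by simpa [cyc] using harc 1 (by simp)
        obtain ⟨t, ht, h⟩ := hnatArc u v a1 (hnat' u (by simp)) (hnat' v (by simp))
        exfalso
        rcases h with ⟨rfl, rfl⟩ | ⟨rfl, rfl⟩ | ⟨rfl, rfl⟩ <;>
          [ exact absurd (hAA t ht 3 1 a2) (by decide);
            exact absurd (hAA t ht 5 3 a2) (by decide);
            exact absurd (hAA t ht 1 5 a2) (by decide) ]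
      · obtain ⟨u, v, w, rfl⟩ := List.length_eq_three.mp h3
        have a1 : (u, v) ∈ G.arcs := by simpa [cyc] using harc 0 (by simp)
        have a2 : (v, w) ∈ G.arcs := by simpa [cyc] using harc 1 (by simp)
        obtain ⟨t, ht, h⟩ := hnatArc u v a1 (hnat' u (by simp)) (hnat' v (by simp))
        obtain ⟨t', ht', h'⟩ := hnatArc v w a2 (hnat' v (by simp)) (hnat' w (by simp))
        refine ⟨t, ht, ?_⟩
        rcases h with ⟨rfl, rfl⟩ | ⟨rfl, rfl⟩ | ⟨rfl, rfl⟩ <;>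
          rcases h' with ⟨he, rfl⟩ | ⟨he, rfl⟩ | ⟨he, rfl⟩ <;>
          obtain ⟨rfl, hj⟩ := hainj t ht t' ht' _ _ he <;>
          first
          | (exact absurd hj (by decide))
          | (refine Or.inr (Or.inr (Or.inr (Or.inr (Or.inr (Or.inr ?_))))); exact ⟨0, rfl⟩)
          | (refine Or.inr (Or.inr (Or.inr (Or.inr (Or.inr (Or.inr ?_))))); exact ⟨2, rfl⟩)
          | (refine Or.inr (Or.inr (Or.inr (Or.inr (Or.inr (Or.inr ?_))))); exact ⟨1, rfl⟩)
    · -- international case: length = 2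
      have h2 : l.length = 2 := by
        have : l.length ≤ 2 := by
          have hval : gadgetParams2.icl = 2 := rfl
          rw [hval] at hlen
          exact_mod_cast hlen
        omega
      obtain ⟨u, v, rfl⟩ := List.length_eq_two.mp h2
      have a1 : (u, v) ∈ G.arcs := by simpa [cyc] using harc 0 (by simp)
      have a2 : (v, u) ∈ G.arcs := by simpa [cyc] using harc 1 (by simp)
      have h := a1
      rw [harcs, Finset.mem_biUnion] at h
      obtain ⟨t, ht, h⟩ := h
      simp only [gadgetArcs2, List.toFinset_cons, List.toFinset_nil, insert_empty_eq,
        Finset.mem_insert, Finset.mem_singleton, Prod.mk.injEq] at h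
      refine ⟨t, ht, ?_⟩
      rcases h with ⟨rfl,rfl⟩|⟨rfl,rfl⟩|⟨rfl,rfl⟩|⟨rfl,rfl⟩|⟨rfl,rfl⟩|⟨rfl,rfl⟩|⟨rfl,rfl⟩|⟨rfl,rfl⟩|⟨rfl,rfl⟩|⟨rfl,rfl⟩|⟨rfl,rfl⟩|⟨rfl,rfl⟩|⟨rfl,rfl⟩|⟨rfl,rfl⟩|⟨rfl,rfl⟩
      · exact Or.inl (List.IsRotated.refl _)
      · exact Or.inl ⟨1, rfl⟩
      · exact Or.inr (Or.inl (List.IsRotated.refl _))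
      · exact Or.inr (Or.inl ⟨1, rfl⟩)
      · exact Or.inr (Or.inr (Or.inl (List.IsRotated.refl _)))
      · exact Or.inr (Or.inr (Or.inl ⟨1, rfl⟩))
      · exact Or.inr (Or.inr (Or.inr (Or.inl (List.IsRotated.refl _))))
      · exact Or.inr (Or.inr (Or.inr (Or.inl ⟨1, rfl⟩)))
      · exact Or.inr (Or.inr (Or.inr (Or.inr (Or.inl (List.IsRotated.refl _)))))
      · exact Or.inr (Or.inr (Or.inr (Or.inr (Or.inl ⟨1, rfl⟩))))
      · exact Or.inr (Or.inr (Or.inr (Or.inr (Or.inr (Or.inl (List.IsRotated.refl _))))))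
      · exact Or.inr (Or.inr (Or.inr (Or.inr (Or.inr (Or.inl ⟨1, rfl⟩)))))
      · exact absurd (hAA t ht 3 1 a2) (by decide)
      · exact absurd (hAA t ht 5 3 a2) (by decide)
      · exact absurd (hAA t ht 1 5 a2) (by decide)
  · rintro ⟨t, ht, h⟩
    have harcmem : ∀ p ∈ gadgetArcs2 a t, p ∈ G.arcs := by
      intro p hp
      rw [harcs, Finset.mem_biUnion]
      exact ⟨t, ht, hp⟩
    have h01 : (a t 0, a t 1) ∈ G.arcs := harcmem _ (by simp only [gadgetArcs2, List.mem_toFinset, List.mem_cons, List.not_mem_nil, or_false]; tauto)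
    have h10 : (a t 1, a t 0) ∈ G.arcs := harcmem _ (by simp only [gadgetArcs2, List.mem_toFinset, List.mem_cons, List.not_mem_nil, or_false]; tauto)
    have h23 : (a t 2, a t 3) ∈ G.arcs := harcmem _ (by simp only [gadgetArcs2, List.mem_toFinset, List.mem_cons, List.not_mem_nil, or_false]; tauto)
    have h32 : (a t 3, a t 2) ∈ G.arcs := harcmem _ (by simp only [gadgetArcs2, List.mem_toFinset, List.mem_cons, List.not_mem_nil, or_false]; tauto)
    have h45 : (a t 4, a t 5) ∈ G.arcs := harcmem _ (by simp only [gadgetArcs2, List.mem_toFinset, List.mem_cons, List.not_mem_nil, or_false]; tauto)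
    have h54 : (a t 5, a t 4) ∈ G.arcs := harcmem _ (by simp only [gadgetArcs2, List.mem_toFinset, List.mem_cons, List.not_mem_nil, or_false]; tauto)
    have h13 : (a t 1, a t 3) ∈ G.arcs := harcmem _ (by simp only [gadgetArcs2, List.mem_toFinset, List.mem_cons, List.not_mem_nil, or_false]; tauto)
    have h35 : (a t 3, a t 5) ∈ G.arcs := harcmem _ (by simp only [gadgetArcs2, List.mem_toFinset, List.mem_cons, List.not_mem_nil, or_false]; tauto)
    have h51 : (a t 5, a t 1) ∈ G.arcs := harcmem _ (by simp only [gadgetArcs2, List.mem_toFinset, List.mem_cons, List.not_mem_nil, or_false]; tauto)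
    have hx : (t.1, a t 0) ∈ G.arcs := harcmem _ (by simp only [gadgetArcs2, List.mem_toFinset, List.mem_cons, List.not_mem_nil, or_false]; tauto)
    have hx' : (a t 0, t.1) ∈ G.arcs := harcmem _ (by simp only [gadgetArcs2, List.mem_toFinset, List.mem_cons, List.not_mem_nil, or_false]; tauto)
    have hy : (t.2.1, a t 2) ∈ G.arcs := harcmem _ (by simp only [gadgetArcs2, List.mem_toFinset, List.mem_cons, List.not_mem_nil, or_false]; tauto)
    have hy' : (a t 2, t.2.1) ∈ G.arcs := harcmem _ (by simp only [gadgetArcs2, List.mem_toFinset, List.mem_cons, List.not_mem_nil, or_false]; tauto)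
    have hz : (t.2.2, a t 4) ∈ G.arcs := harcmem _ (by simp only [gadgetArcs2, List.mem_toFinset, List.mem_cons, List.not_mem_nil, or_false]; tauto)
    have hz' : (a t 4, t.2.2) ∈ G.arcs := harcmem _ (by simp only [gadgetArcs2, List.mem_toFinset, List.mem_cons, List.not_mem_nil, or_false]; tauto)
    have hc1 : G.country t.1 = 0 := hcXYZ _ (by simp [(hTsub t ht).1])
    have hc2 : G.country t.2.1 = 0 := hcXYZ _ (by simp [(hTsub t ht).2.1])
    have hc3 : G.country t.2.2 = 0 := hcXYZ _ (by simp [(hTsub t ht).2.2])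
    have twoG : ∀ u v : ℕ, (u, v) ∈ G.arcs → (v, u) ∈ G.arcs →
        G.country u ≠ G.country v → ∀ l' : List ℕ, (l' = [u,v] ∨ l' = [v,u]) →
        IsGammaCycle G gadgetParams2 l' := by
      rintro u v h1 h2 h3 l' (rfl | rfl)
      · exact two_cycle_gamma G u v h1 h2 h3
      · exact two_cycle_gamma G v u h2 h1 (Ne.symm h3)
    rcases h with h | h | h | h | h | h | h
    · exact twoG _ _ hx hx' (by rw [hc1, hcA1 t ht]; decide) l (rot2 _ _ _ h)
    · exact twoG _ _ hy hy' (by rw [hc2, hcA3 t ht]; decide) l (rot2 _ _ _ h)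
    · exact twoG _ _ hz hz' (by rw [hc3, hcA5 t ht]; decide) l (rot2 _ _ _ h)
    · exact twoG _ _ h01 h10
        (by rw [hcA1 t ht, hcA0 t ht 1 (by decide)]; decide) l (rot2 _ _ _ h)
    · exact twoG _ _ h23 h32
        (by rw [hcA3 t ht, hcA0 t ht 3 (by decide)]; decide) l (rot2 _ _ _ h)
    · exact twoG _ _ h45 h54
        (by rw [hcA5 t ht, hcA0 t ht 5 (by decide)]; decide) l (rot2 _ _ _ h)
    · have c1 := hcA0 t ht 1 (by decide)
      have c3 := hcA0 t ht 3 (by decide)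
      have c5 := hcA0 t ht 5 (by decide)
      have a13 := h13
      have a35 := h35
      have a51 := h51
      rcases rot3 _ _ _ _ h with rfl | rfl | rfl
      · exact three_cycle_gamma G _ _ _ a13 a35 a51 (by simp [c1, c3, c5])
      · exact three_cycle_gamma G _ _ _ a35 a51 a13 (by simp [c1, c3, c5])
      · exact three_cycle_gamma G _ _ _ a51 a13 a35 (by simp [c1, c3, c5])
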